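/- Let α be any real number and p(λ) = −i·Log(−i·tanh λ). Then for every real x the real part of g(λ) = i·(α·p(λ) + cos(p(λ))) vanishes at λ = x + iπ/4, and for every real x ≠ 0 it vanishes at λ = x − iπ/4; that is, Re g = 0 on the lines ℝ ± iπ/4 (away from −iπ/4). -/

import Mathlib

open Complex Real

/-- The momentum function of the XX chain: `p(λ) = -i Log(-i tanh λ)`,
with `Log` the principal branch of the complex logarithm. -/
noncomputable def momentum (l : ℂ) : ℂ := -Complex.I * Complex.log (-Complex.I * Complex.tanh l)

/-- The phase function `g(λ) = i (α p(λ) + cos(p(λ)))` of the wave factors. -/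
noncomputable def phase (α : ℝ) (l : ℂ) : ℂ :=
  Complex.I * ((α : ℂ) * momentum l + Complex.cos (momentum l))

lemma sinh_form (a b : ℝ) :
    Complex.sinh (a + b * Complex.I) =
      (Real.sinh a * Real.cos b : ℝ) + (Real.cosh a * Real.sin b : ℝ) * Complex.I := by
  rw [Complex.sinh_add, Complex.sinh_mul_I, Complex.cosh_mul_I]
  push_cast [Complex.ofReal_sinh, Complex.ofReal_cosh, Complex.ofReal_cos, Complex.ofReal_sin]
  ring

lemma cosh_form (a b : ℝ) :
    Complex.cosh (a + b * Complex.I) =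
      (Real.cosh a * Real.cos b : ℝ) + (Real.sinh a * Real.sin b : ℝ) * Complex.I := by
  rw [Complex.cosh_add, Complex.sinh_mul_I, Complex.cosh_mul_I]
  push_cast [Complex.ofReal_sinh, Complex.ofReal_cosh, Complex.ofReal_cos, Complex.ofReal_sin]
  ring

lemma abs_helper (a b : ℝ) (hb : Real.cos b ^ 2 = 1/2) (hb' : 0 < Real.cos b) :
    ‖-Complex.I * Complex.tanh (a + b * Complex.I)‖ = 1 := by
  have hs : Real.sin b ^ 2 = 1/2 := by
    have := Real.sin_sq_add_cos_sq b; linarith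
  have hcosh : Complex.cosh (a + b * Complex.I) ≠ 0 := by
    rw [cosh_form]
    intro h
    have hre : Real.cosh a * Real.cos b = 0 := by
      simpa [Complex.cos_ofReal_re] using congrArg Complex.re h
    nlinarith [Real.cosh_pos a]
  have habs : ‖Complex.sinh (a + b * Complex.I)‖ =
      ‖Complex.cosh (a + b * Complex.I)‖ := by
    rw [sinh_form, cosh_form]
    rw [Complex.norm_def, Complex.norm_def, Complex.normSq_add_mul_I, Complex.normSq_add_mul_I]
    congr 1
    nlinarith [Real.sinh_sq a, Real.sin_sq_add_cos_sq b]
  rw [norm_mul, Complex.tanh_eq_sinh_div_cosh, norm_div, habs,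
    div_self (by simpa using hcosh)]
  simp

lemma re_phase_zero (a b : ℝ) (hb : Real.cos b ^ 2 = 1/2) (hb' : 0 < Real.cos b) (α : ℝ) :
    (phase α (a + b * Complex.I)).re = 0 := by
  set l : ℂ := a + b * Complex.I
  have habs := abs_helper a b hb hb'
  have habs' : ‖-(Complex.I * Complex.tanh l)‖ = 1 := by
    rw [← neg_mul]; exact habs
  have hlogre : (Complex.log (-(Complex.I * Complex.tanh l))).re = 0 := by
    rw [Complex.log_re, habs', Real.log_one]
  have him : (momentum l).im = 0 := by
    simp [momentum, Complex.mul_im, hlogre]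
  have hp : momentum l = ((momentum l).re : ℂ) := by
    exact Complex.ext (by simp) (by simp [him])
  rw [phase, hp]
  rw [← Complex.ofReal_cos, ← Complex.ofReal_mul, ← Complex.ofReal_add]
  simp

/-- For any real `α`, the real part of the phase function `g` vanishes on the lines
`ℝ ± iπ/4` (away from the point `-iπ/4`). -/
theorem re_phase_vanishes_on_lines (α : ℝ) :
    ∀ x : ℝ,
      (phase α (x + Complex.I * (π / 4))).re = 0 ∧
      (x ≠ 0 → (phase α (x - Complex.I * (π / 4))).re = 0) := by
  intro x
  have h1 : Real.cos (π/4) ^ 2 = 1/2 := by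
    rw [Real.cos_pi_div_four]; rw [div_pow, Real.sq_sqrt (by norm_num : (2:ℝ) ≥ 0)]; norm_num
  have h1' : 0 < Real.cos (π/4) := by
    rw [Real.cos_pi_div_four]; positivity
  have h2 : Real.cos (-(π/4)) ^ 2 = 1/2 := by rw [Real.cos_neg]; exact h1
  have h2' : 0 < Real.cos (-(π/4)) := by rw [Real.cos_neg]; exact h1'
  constructor
  · have := re_phase_zero x (π/4) h1 h1' α
    convert this using 3
    push_cast; ring
  · intro _
    have := re_phase_zero x (-(π/4)) h2 h2' α
    convert this using 3
    push_cast; ring
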